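/- arXiv:2012.09975 — 3 statements merged into one kernel-verified Lean document; each statement's English description precedes it below -/
import Mathlib

section
/- Define Γ as the set {r⁻ | r ∈ (0,1]} ∪ {q° | q ∈ [0,1]∩ℚ} with the unique total order having 0° as bottom, satisfying r* < s* iff r < s (for stars in {⁻,°}), and q⁻ < q° with no element strictly in between for each rational q ∈ (0,1]. Then Γ is a complete lattice. -/
open scoped Classical

/-- The carrier of the "doubled unit interval" `Γ`: pairs `(r, b)` ordered
lexicographically, where `b = true` represents an exact value `r°`
(which must be rational) and `b = false` represents an approximation `r⁻`
(which must satisfy `r > 0`). -/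
def GammaCarrier : Set (Lex (ℝ × Bool)) :=
  {p | 0 ≤ (ofLex p).1 ∧ (ofLex p).1 ≤ 1 ∧
    ((ofLex p).2 = true → ∃ q : ℚ, (q : ℝ) = (ofLex p).1) ∧
    ((ofLex p).2 = false → 0 < (ofLex p).1)}

/-- The doubled unit interval `Γ`, with the (total) order inherited from the
lexicographic product: `r* < s*` iff `r < s`, and `q⁻ < q°` immediately. -/
abbrev Gamma : Type := {p : Lex (ℝ × Bool) // p ∈ GammaCarrier}

theorem mem_gammaCarrier {a : ℝ} {b : Bool} (h1 : 0 ≤ a) (h2 : a ≤ 1)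
    (h3 : b = true → ∃ q : ℚ, (q : ℝ) = a) (h4 : b = false → 0 < a) :
    toLex (a, b) ∈ GammaCarrier := ⟨h1, h2, h3, h4⟩

/-- The underlying real number of an element of `Γ` (the map `γ`). -/
def γmap (x : Gamma) : ℝ := (ofLex x.1).1

/-- An element of `Γ` is exact iff it is of `°`-type. -/
def gexact (x : Gamma) : Prop := (ofLex x.1).2 = true

theorem gmem (x : Gamma) : 0 ≤ (ofLex x.1).1 ∧ (ofLex x.1).1 ≤ 1 ∧
    ((ofLex x.1).2 = true → ∃ q : ℚ, (q : ℝ) = (ofLex x.1).1) ∧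
    ((ofLex x.1).2 = false → 0 < (ofLex x.1).1) := x.2

/-- Smart constructor for `Γ`: clamps `r` into `[0,1]`, and produces the exact
value `r°` if `e = true` and `r` is rational (or `r = 0`), and `r⁻` otherwise. -/
noncomputable def mk' (r : ℝ) (e : Bool) : Gamma :=
  if h : (e = true ∧ ∃ q : ℚ, (q : ℝ) = max 0 (min 1 r)) ∨ max 0 (min 1 r) = 0 then
    ⟨toLex (max 0 (min 1 r), true),
      mem_gammaCarrier (le_max_left 0 _) (max_le zero_le_one (min_le_left 1 r))
        (fun _ => h.elim (fun h' => h'.2) (fun h0 => ⟨0, by rw [h0]; norm_num⟩))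
        (fun hc => absurd hc (by simp))⟩
  else
    ⟨toLex (max 0 (min 1 r), false),
      mem_gammaCarrier (le_max_left 0 _) (max_le zero_le_one (min_le_left 1 r))
        (fun hc => absurd hc (by simp))
        (fun _ => lt_of_le_of_ne (le_max_left 0 _) (fun h0 => h (Or.inr h0.symm)))⟩

/-- `0°`, the bottom element of `Γ`. -/
noncomputable def gzero : Gamma := mk' 0 true
/-- `1°`, the top element of `Γ`. -/
noncomputable def gone : Gamma := mk' 1 true
/-- The section `ι° : [0,1] → Γ`, `r ↦ r°` for rational `r` and `r ↦ r⁻` otherwise. -/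
noncomputable def icircR (r : ℝ) : Gamma := mk' r true
/-- The section `ι⁻ : [0,1] → Γ`, `0 ↦ 0°` and `r ↦ r⁻` for `r > 0`. -/
noncomputable def iminusR (r : ℝ) : Gamma := mk' r false
/-- The exact value `q°` of a rational `q ∈ [0,1]`. -/
noncomputable def gq (q : ℚ) : Gamma := mk' (q : ℝ) true
/-- `ι°` as a map on the unit interval. -/
noncomputable def icirc (r : Set.Icc (0:ℝ) 1) : Gamma := icircR r.1
/-- `ι⁻` as a map on the unit interval. -/
noncomputable def iminusI (r : Set.Icc (0:ℝ) 1) : Gamma := iminusR r.1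
/-- `γ : Γ → [0,1]` as a map into the unit interval. -/
noncomputable def gmapI (x : Gamma) : Set.Icc (0:ℝ) 1 := ⟨γmap x, (gmem x).1, (gmem x).2.1⟩

/-- The partial subtraction `∸` on `Γ` (meaningful when `y ≤ x`):
`r° ∸ s° = (r−s)°`, `r⁻ ∸ s° = (r−s)⁻`, and `r* ∸ s⁻ = (r−s)°` if `r−s ∈ ℚ`,
`(r−s)⁻` otherwise. -/
noncomputable def gsub (x y : Gamma) : Gamma :=
  mk' (γmap x - γmap y)
    (if (gexact x ∧ gexact y) ∨ (¬ gexact y ∧ ∃ q : ℚ, (q : ℝ) = γmap x - γmap y)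
      then true else false)

/-- The second partial subtraction `∸̃` on `Γ` (meaningful when `y ≤ x`):
`x ∸̃ x = 0°` and, for `y < x`, `r° ∸̃ s° = r⁻ ∸̃ s⁻ = r⁻ ∸̃ s° = (r−s)⁻` and
`r° ∸̃ s⁻ = (r−s)°` if `r−s ∈ ℚ`, `(r−s)⁻` otherwise. -/
noncomputable def gsubt (x y : Gamma) : Gamma :=
  mk' (γmap x - γmap y)
    (if gexact x ∧ ¬ gexact y ∧ ∃ q : ℚ, (q : ℝ) = γmap x - γmap y then true else false)

/-- The partial addition `+` on `Γ` (meaningful when `x ≤ 1° ∸ y`):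
`r° + s° = (r+s)°` and any sum involving a `⁻`-argument is of `⁻`-type. -/
noncomputable def gadd (x y : Gamma) : Gamma :=
  mk' (γmap x + γmap y) (if gexact x ∧ gexact y then true else false)

/-- A `Γ`-valued (finitely additive, probability) measure on a bounded lattice. -/
def IsGMeasure {D : Type*} [Lattice D] [BoundedOrder D] (μ : D → Gamma) : Prop :=
  Monotone μ ∧ μ ⊥ = gzero ∧ μ ⊤ = gone ∧
  ∀ a b : D, gsubt (μ a) (μ (a ⊓ b)) ≤ gsub (μ (a ⊔ b)) (μ b) ∧
    gsubt (μ (a ⊔ b)) (μ b) ≤ gsub (μ a) (μ (a ⊓ b))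

lemma gamma_le_iff (x y : Gamma) :
    x ≤ y ↔ (ofLex x.1).1 < (ofLex y.1).1 ∨
      ((ofLex x.1).1 = (ofLex y.1).1 ∧ (ofLex x.1).2 ≤ (ofLex y.1).2) := by
  rw [← Subtype.coe_le_coe]
  exact Prod.Lex.le_iff

lemma gamma_mono {x y : Gamma} (h : x ≤ y) : γmap x ≤ γmap y := by
  rcases (gamma_le_iff x y).1 h with h | h
  · exact h.le
  · exact h.1.le

/-- The bottom element `0°` of `Γ`, as a raw subtype element. -/
noncomputable def gbot : Gamma :=
  ⟨toLex ((0:ℝ), true), mem_gammaCarrier le_rfl zero_le_one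
    (fun _ => ⟨0, by norm_num⟩) (fun h => by simp at h)⟩

lemma gbot_le (y : Gamma) : gbot ≤ y := by
  rw [gamma_le_iff]
  rcases lt_or_eq_of_le (gmem y).1 with h | h
  · exact Or.inl h
  · refine Or.inr ⟨h, ?_⟩
    cases hb : (ofLex y.1).2 with
    | true => exact le_rfl
    | false => exact absurd ((gmem y).2.2.2 hb) (by rw [← h]; simp)

lemma gamma_exists_isLUB (S : Set Gamma) : ∃ x, IsLUB S x := by
  rcases S.eq_empty_or_nonempty with rfl | hne
  · exact ⟨gbot, by simp [IsLUB, IsLeast, upperBounds, lowerBounds], fun y _ => gbot_le y⟩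
  set T : Set ℝ := γmap '' S with hT
  have hTne : T.Nonempty := hne.image _
  have hTbdd : BddAbove T := ⟨1, fun r ⟨x, _, hx⟩ => hx ▸ (gmem x).2.1⟩
  set r : ℝ := sSup T with hr
  have hr1 : r ≤ 1 := csSup_le hTne (fun t ⟨x, _, hx⟩ => hx ▸ (gmem x).2.1)
  obtain ⟨x0, hx0⟩ := hne
  have hr0 : 0 ≤ r := le_trans (gmem x0).1 (le_csSup hTbdd ⟨x0, hx0, rfl⟩)
  have hub : ∀ x ∈ S, γmap x ≤ r := fun x hx => le_csSup hTbdd ⟨x, hx, rfl⟩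
  have hle : ∀ u ∈ upperBounds S, r ≤ γmap u := fun u hu =>
    csSup_le hTne (fun t ⟨x, hx, hxt⟩ => hxt ▸ gamma_mono (hu hx))
  by_cases hA : ∃ x ∈ S, γmap x = r ∧ gexact x
  · obtain ⟨x, hxS, hxr, hxe⟩ := hA
    refine ⟨x, fun y hy => ?_, fun u hu => hu hxS⟩
    rw [gamma_le_iff]
    rcases lt_or_eq_of_le ((hub y hy).trans_eq hxr.symm) with h | h
    · exact Or.inl h
    · exact Or.inr ⟨h, by rw [gexact] at hxe; rw [hxe]; exact Bool.le_true _⟩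
  · have hrpos : 0 < r := by
      rcases lt_or_eq_of_le hr0 with h | h
      · exact h
      · exfalso
        apply hA
        refine ⟨x0, hx0, le_antisymm (hub x0 hx0) (h ▸ (gmem x0).1), ?_⟩
        cases hb : (ofLex x0.1).2 with
        | true => exact hb
        | false =>
          exact absurd ((gmem x0).2.2.2 hb)
            (not_lt.2 ((hub x0 hx0).trans h.symm.le))
    refine ⟨⟨toLex (r, false), mem_gammaCarrier hr0 hr1
      (fun h => by simp at h) (fun _ => hrpos)⟩, fun y hy => ?_, fun u hu => ?_⟩
    · rw [gamma_le_iff]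
      rcases lt_or_eq_of_le (hub y hy) with h | h
      · exact Or.inl h
      · refine Or.inr ⟨h, ?_⟩
        cases hb : (ofLex y.1).2 with
        | true => exact absurd ⟨y, hy, h, hb⟩ hA
        | false => exact le_rfl
    · rw [gamma_le_iff]
      rcases lt_or_eq_of_le (hle u hu) with h | h
      · exact Or.inl h
      · exact Or.inr ⟨h, Bool.false_le _⟩

/-- `Γ` (with its total order, `0°` at the bottom) is a complete
lattice: every subset has a least upper bound and a greatest lower bound. -/
theorem stmt_2 : ∀ S : Set Gamma, (∃ x, IsLUB S x) ∧ (∃ x, IsGLB S x) := by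
  intro S
  refine ⟨gamma_exists_isLUB S, ?_⟩
  obtain ⟨x, hx⟩ := gamma_exists_isLUB (lowerBounds S)
  refine ⟨x, fun s hs => hx.2 (fun l hl => hl hs), fun l hl => hx.1 hl⟩
end

section
/- The partial subtraction ∸ : {(x,y) ∈ Γ × Γ | y ≤ x} → Γ defined by r° ∸ s° = (r−s)°, r⁻ ∸ s° = (r−s)⁻, and r* ∸ s⁻ = (r−s)° if r−s ∈ ℚ and (r−s)⁻ otherwise (for * ∈ {°,⁻}), is monotone: if y ≤ x, x ≤ x', and y' ≤ y (with y' ≤ x'), then x ∸ y ≤ x' ∸ y'. -/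
open scoped Classical

theorem gamma_le_iff_s6 (a b : Gamma) :
    a ≤ b ↔ γmap a < γmap b ∨ (γmap a = γmap b ∧ (gexact a → gexact b)) := by
  obtain ⟨pa, ha⟩ := a; obtain ⟨pb, hb⟩ := b
  exact (Prod.Lex.le_iff (x := pa) (y := pb)).trans
    (by simp [γmap, gexact, Bool.le_iff_imp])

theorem γmap_mk' (r : ℝ) (e : Bool) : γmap (mk' r e) = max 0 (min 1 r) := by
  unfold mk'; split <;> rfl

theorem gexact_mk' (r : ℝ) (e : Bool) : gexact (mk' r e) ↔
    ((e = true ∧ ∃ q : ℚ, (q : ℝ) = max 0 (min 1 r)) ∨ max 0 (min 1 r) = 0) := by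
  unfold mk'; split
  · exact iff_of_true rfl ‹_›
  · exact iff_of_false (by simp [gexact]) ‹_›


/-- the partial subtraction `∸` on `Γ` is monotone: if `y ≤ x`,
`x ≤ x'` and `y' ≤ y` (with `y' ≤ x'`), then `x ∸ y ≤ x' ∸ y'`. -/
theorem stmt_6 (x y x' y' : Gamma) (hyx : y ≤ x) (hx : x ≤ x') (hy : y' ≤ y)
    (hy'x' : y' ≤ x') :
    gsub x y ≤ gsub x' y' := by
  have hmono : ∀ a b : Gamma, a ≤ b → γmap a ≤ γmap b := by
    intro a b h
    rcases (gamma_le_iff_s6 a b).1 h with h | h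
    · exact h.le
    · exact h.1.le
  have hγyx := hmono _ _ hyx
  have hγx := hmono _ _ hx
  have hγy := hmono _ _ hy
  have hγy'x' := hmono _ _ hy'x'
  have hx1 : γmap x ≤ 1 := (gmem x).2.1
  have hy0 : 0 ≤ γmap y := (gmem y).1
  have hx'1 : γmap x' ≤ 1 := (gmem x').2.1
  have hy'0 : 0 ≤ γmap y' := (gmem y').1
  have hcd : max 0 (min 1 (γmap x - γmap y)) = γmap x - γmap y := by
    rw [min_eq_right (by linarith), max_eq_right (by linarith)]
  have hcd' : max 0 (min 1 (γmap x' - γmap y')) = γmap x' - γmap y' := by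
    rw [min_eq_right (by linarith), max_eq_right (by linarith)]
  rw [gamma_le_iff_s6]
  rw [gsub, gsub, γmap_mk', γmap_mk', gexact_mk', gexact_mk', hcd, hcd']
  rcases lt_or_eq_of_le (show γmap x - γmap y ≤ γmap x' - γmap y' by linarith)
    with hlt | heq
  · exact Or.inl hlt
  · right
    refine ⟨heq, ?_⟩
    have hxx : γmap x = γmap x' := by linarith
    have hyy : γmap y' = γmap y := by linarith
    have hex : gexact x → gexact x' := by
      rcases (gamma_le_iff_s6 x x').1 hx with h | h
      · exact absurd hxx h.ne
      · exact h.2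
    have hey : gexact y' → gexact y := by
      rcases (gamma_le_iff_s6 y' y).1 hy with h | h
      · exact absurd hyy h.ne
      · exact h.2
    rintro (⟨ht, hq⟩ | h0)
    · -- t was exact (and diff nonzero case)
      by_cases hP : (gexact x ∧ gexact y) ∨ (¬ gexact y ∧ ∃ q : ℚ, (q : ℝ) = γmap x - γmap y)
      swap
      · simp [hP] at ht
      left
      constructor
      · rw [if_pos]
        rcases hP with ⟨hx2, hy2⟩ | ⟨hy2, _⟩
        · by_cases hy'2 : gexact y'
          · exact Or.inl ⟨hex hx2, hy'2⟩
          · refine Or.inr ⟨hy'2, ?_⟩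
            obtain ⟨q, hqe⟩ := hq
            exact ⟨q, by rw [hqe]; linarith⟩
        · refine Or.inr ⟨fun hc => hy2 (hey hc), ?_⟩
          obtain ⟨q, hqe⟩ := hq
          exact ⟨q, by rw [hqe]; linarith⟩
      · obtain ⟨q, hqe⟩ := hq
        exact ⟨q, by rw [hqe]; linarith⟩
    · exact Or.inr (by linarith)
end

section
/- Define the partial addition + on Γ by r° + s° = (r+s)°, r⁻ + s° = r° + s⁻ = r⁻ + s⁻ = (r+s)⁻, defined whenever x ≤ 1° ∸ y. Then for every x ∈ Γ, the map (−) + x : [0°, 1° ∸ x] → [x, 1°] is left adjoint to (−) ∸ x : [x, 1°] → [0°, 1° ∸ x]: that is, y + x ≤ z iff y ≤ z ∸ x. -/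
open scoped Classical

theorem gamma_le_iff_s7 (u v : Gamma) : u ≤ v ↔ γmap u < γmap v ∨
    (γmap u = γmap v ∧ ((ofLex u.1).2 ≤ (ofLex v.1).2)) := by
  change u.1 ≤ v.1 ↔ _
  exact Prod.Lex.le_iff

theorem mk'_snd (r : ℝ) (e : Bool) : (ofLex (mk' r e).1).2 = true ↔
    ((e = true ∧ ∃ q : ℚ, (q : ℝ) = max 0 (min 1 r)) ∨ max 0 (min 1 r) = 0) := by
  unfold mk'; split_ifs with h
  · simpa using h
  · simpa using h

theorem if_tf_iff (P : Prop) [Decidable P] : (if P then true else false) = true ↔ P := by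
  split_ifs with h <;> simp [h]

/-- for every `x ∈ Γ`, the partial addition `(−) + x` on the
interval `[0°, 1° ∸ x]` is left adjoint to `(−) ∸ x` on `[x, 1°]`:
`y + x ≤ z` iff `y ≤ z ∸ x`. -/
theorem stmt_7 (x y z : Gamma) (hy0 : gzero ≤ y) (hy : y ≤ gsub gone x)
    (hzx : x ≤ z) (hz1 : z ≤ gone) :
    gadd y x ≤ z ↔ y ≤ gsub z x := by
  have ha0 : (0:ℝ) ≤ γmap x := (gmem x).1
  have ha1 : γmap x ≤ 1 := (gmem x).2.1
  have hxq : gexact x → ∃ q : ℚ, (q:ℝ) = γmap x := (gmem x).2.2.1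
  have hxp := (gmem x).2.2.2
  have hb0 : (0:ℝ) ≤ γmap y := (gmem y).1
  have hb1 : γmap y ≤ 1 := (gmem y).2.1
  have hyq : gexact y → ∃ q : ℚ, (q:ℝ) = γmap y := (gmem y).2.2.1
  have hyp := (gmem y).2.2.2
  have hc0 : (0:ℝ) ≤ γmap z := (gmem z).1
  have hc1 : γmap z ≤ 1 := (gmem z).2.1
  have hzq : gexact z → ∃ q : ℚ, (q:ℝ) = γmap z := (gmem z).2.2.1
  have hzp := (gmem z).2.2.2
  set a := γmap x with hadef
  set b := γmap y with hbdef
  set c := γmap z with hcdef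
  have hgone : γmap gone = 1 := by
    show γmap (mk' 1 true) = 1
    rw [γmap_mk']; norm_num
  have hsub1 : γmap (gsub gone x) = 1 - a := by
    rw [gsub, γmap_mk', hgone]
    rw [min_eq_right (by linarith), max_eq_right (by linarith)]
  have hba : b ≤ 1 - a := by
    rcases (gamma_le_iff_s7 _ _).1 hy with h | h
    · rw [hsub1] at h; linarith
    · rw [hsub1] at h; linarith [h.1]
  have hca : a ≤ c := by
    rcases (gamma_le_iff_s7 _ _).1 hzx with h | h
    · linarith
    · linarith [h.1.le]
  have haddval : γmap (gadd y x) = b + a := by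
    rw [gadd, γmap_mk']
    rw [min_eq_right (by linarith), max_eq_right (by linarith)]
  have hsubval : γmap (gsub z x) = c - a := by
    rw [gsub, γmap_mk']
    rw [min_eq_right (by linarith), max_eq_right (by linarith)]
  rw [gamma_le_iff_s7, gamma_le_iff_s7, haddval, hsubval, ← hcdef, ← hbdef]
  rcases lt_trichotomy (b + a) c with hlt | heq | hgt
  · constructor <;> intro _ <;> left <;> linarith
  · -- tie case
    have h1 : ¬ (b + a < c) := by linarith
    have h2 : ¬ (b < c - a) := by linarith
    have h3 : b = c - a := by linarith
    have hL : ∀ P : Prop, (b + a < c ∨ (b + a = c ∧ P)) ↔ P := by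
      intro P
      constructor
      · rintro (h | ⟨_, h⟩)
        · exact absurd h h1
        · exact h
      · intro h; exact Or.inr ⟨heq, h⟩
    have hR : ∀ P : Prop, (b < c - a ∨ (b = c - a ∧ P)) ↔ P := by
      intro P
      constructor
      · rintro (h | ⟨_, h⟩)
        · exact absurd h h2
        · exact h
      · intro h; exact Or.inr ⟨h3, h⟩
    rw [hL, hR, Bool.le_iff_imp, Bool.le_iff_imp]
    have htadd : (ofLex (gadd y x).1).2 = true ↔
        ((gexact y ∧ gexact x) ∧ ∃ q : ℚ, (q : ℝ) = b + a) ∨ b + a = 0 := by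
      rw [gadd, mk'_snd, min_eq_right (by linarith), max_eq_right (by linarith)]
      simp only [if_tf_iff]
      exact Iff.rfl
    have htsub : (ofLex (gsub z x).1).2 = true ↔
        (((gexact z ∧ gexact x) ∨ (¬ gexact x ∧ ∃ q : ℚ, (q : ℝ) = c - a)) ∧
          ∃ q : ℚ, (q : ℝ) = c - a) ∨ c - a = 0 := by
      rw [gsub, mk'_snd, min_eq_right (by linarith), max_eq_right (by linarith)]
      simp only [if_tf_iff]
      exact Iff.rfl
    rw [htadd, htsub]
    by_cases hbx : gexact x
    · obtain ⟨qa, hqa⟩ := hxq hbx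
      by_cases hby : gexact y
      · obtain ⟨qb, hqb⟩ := hyq hby
        have hrat : ∃ q : ℚ, (q : ℝ) = b + a := ⟨qb + qa, by push_cast; rw [hqa, hqb]⟩
        have hratc : ∃ q : ℚ, (q : ℝ) = c - a := ⟨qb, by rw [hqb]; exact h3⟩
        constructor
        · intro h _
          have hbz : (ofLex z.1).2 = true := h (Or.inl ⟨⟨hby, hbx⟩, hrat⟩)
          exact Or.inl ⟨Or.inl ⟨hbz, hbx⟩, hratc⟩
        · intro h _
          rcases h hby with ⟨hcond, _⟩ | hc0'
          · rcases hcond with ⟨hbz, _⟩ | ⟨hnx, _⟩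
            · exact hbz
            · exact absurd hbx hnx
          · -- c = a, use hzx
            rcases (gamma_le_iff_s7 _ _).1 hzx with hlt' | ⟨_, hle⟩
            · exfalso; rw [← hadef, ← hcdef] at hlt'; linarith
            · exact Bool.le_iff_imp.1 hle hbx
      · have hbpos : 0 < b := hyp (by simpa [gexact] using hby)
        constructor
        · intro _ hby'
          exact absurd hby' hby
        · intro _ hcond
          rcases hcond with ⟨⟨hby', _⟩, _⟩ | h0
          · exact absurd hby' hby
          · linarith
    · have hapos : 0 < a := hxp (by simpa [gexact] using hbx)
      constructor
      · intro _ hby'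
        obtain ⟨qb, hqb⟩ := hyq hby'
        have hratc : ∃ q : ℚ, (q : ℝ) = c - a := ⟨qb, by rw [hqb]; exact h3⟩
        exact Or.inl ⟨Or.inr ⟨hbx, hratc⟩, hratc⟩
      · intro _ hcond
        rcases hcond with ⟨⟨_, hbx'⟩, _⟩ | h0
        · exact absurd hbx' hbx
        · linarith
  · constructor <;> intro h <;> exfalso <;>
      rcases h with h | ⟨h, _⟩ <;> linarith
end
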